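/- Let G be (⌊3f/2⌋+1)-connected, F a vertex set with |F| ≤ f, and let A, B partition V(G) with v ∈ B. Suppose |B ∩ (F∖{v})| ≤ ⌊f/2⌋ and |A| ≥ f+1. Then there exist f+1 pairwise internally disjoint paths from distinct vertices of A to v such that no internal vertex of any path lies in F. -/

import Mathlib

open Finset

/-- Internal vertices of a walk: all vertices of its support except the endpoints. -/
def SimpleGraph.Walk.internals {V : Type*} {G : SimpleGraph V} {u v : V}
    (p : G.Walk u v) : List V :=
  p.support.tail.dropLast

/-- A graph is `k`-connected if it has more than `k` vertices and removing any set
of at most `k` vertices leaves it connected. -/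
def KConnected {V : Type*} [DecidableEq V] (G : SimpleGraph V) (k : ℕ) : Prop :=
  k < Nat.card V ∧
    ∀ S : Finset V, S.card ≤ k → (((⊤ : G.Subgraph).deleteVerts ↑S).coe).Connected

namespace MengerAux

open SimpleGraph SimpleGraph.Walk

variable {V : Type*}

/-- `S` separates `X` from `Y` in `H`: every walk from `X` to `Y` meets `S`. -/
def Sep (H : SimpleGraph V) (X Y S : Finset V) : Prop :=
  ∀ ⦃a : V⦄, a ∈ X → ∀ ⦃b : V⦄, b ∈ Y → ∀ p : H.Walk a b, ∃ s ∈ S, s ∈ p.support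

/-- `k` pairwise disjoint `X`–`Y` paths. -/
def PathSys (H : SimpleGraph V) (X Y : Finset V) (k : ℕ) : Prop :=
  ∃ (a b : Fin k → V) (P : ∀ i, H.Walk (a i) (b i)),
    (∀ i, a i ∈ X) ∧ (∀ i, b i ∈ Y) ∧ (∀ i, (P i).IsPath) ∧
    ∀ i j, i ≠ j → ∀ u, u ∈ (P i).support → u ∉ (P j).support

lemma PathSys.mono {H H' : SimpleGraph V} (hle : H ≤ H') {X Y : Finset V} {k : ℕ}
    (h : PathSys H X Y k) : PathSys H' X Y k := by
  obtain ⟨a, b, P, ha, hb, hp, hd⟩ := h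
  have hedges : ∀ i, ∀ e ∈ (P i).edges, e ∈ H'.edgeSet := fun i e he =>
    (SimpleGraph.edgeSet_subset_edgeSet.2 hle) ((P i).edges_subset_edgeSet he)
  refine ⟨a, b, fun i => (P i).transfer H' (hedges i), ha, hb,
    fun i => (hp i).transfer _, fun i j hij u hu => ?_⟩
  rw [support_transfer] at hu ⊢
  exact hd i j hij u hu

/-- Truncate a walk at its first vertex belonging to `S`. -/
lemma firstHit {H : SimpleGraph V} (S : Set V) :
    ∀ {a b : V} (p : H.Walk a b), b ∈ S →
    ∃ (c : V) (q : H.Walk a c), c ∈ S ∧ (∀ u ∈ q.support, u ∈ p.support) ∧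
      (∀ u ∈ q.support, u ∈ S → u = c) ∧ (p.IsPath → q.IsPath)
  | a, _, Walk.nil, hb => ⟨a, Walk.nil, hb, by simp, by simp_all, fun h => h⟩
  | a, b, @Walk.cons _ _ _ c _ h p', hb => by
    by_cases ha : a ∈ S
    · exact ⟨a, Walk.nil, ha, by simp, by simp_all, fun _ => IsPath.nil⟩
    · obtain ⟨c, q, hc, hsub, honly, hpath⟩ := firstHit S p' hb
      refine ⟨c, Walk.cons h q, hc, ?_, ?_, ?_⟩
      · intro u hu
        rw [support_cons, List.mem_cons] at hu ⊢
        exact hu.imp id fun h' => hsub u h'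
      · intro u hu huS
        rw [support_cons, List.mem_cons] at hu
        rcases hu with rfl | hu
        · exact absurd huS ha
        · exact honly u hu huS
      · intro hp
        rw [cons_isPath_iff] at hp ⊢
        exact ⟨hpath hp.1, fun hmem => hp.2 (hsub a hmem)⟩

/-- Orientation lemma: a path through the edge `s(x,y)` decomposes into a walk
avoiding the edge into one endpoint and a walk avoiding the edge out of the other. -/
lemma orient {H : SimpleGraph V} {x y : V} :
    ∀ {a b : V} (p : H.Walk a b), p.IsPath → s(x, y) ∈ p.edges →
    ∃ (w₁ w₂ : V), s(w₁, w₂) = s(x, y) ∧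
      ∃ (q : (H.deleteEdges {s(x,y)}).Walk a w₁) (r : (H.deleteEdges {s(x,y)}).Walk w₂ b),
        (∀ u ∈ q.support, u ∈ p.support) ∧ (∀ u ∈ r.support, u ∈ p.support)
  | a, _, Walk.nil, _, he => by simp at he
  | a, b, @Walk.cons _ _ _ c _ h p', hp, he => by
    rw [edges_cons, List.mem_cons] at he
    by_cases hhead : s(a, c) = s(x, y)
    case pos =>
      refine ⟨a, _, hhead, Walk.nil, p'.transfer _ fun e' he' => ?_, by simp, ?_⟩
      · rw [SimpleGraph.edgeSet_deleteEdges]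
        refine ⟨p'.edges_subset_edgeSet he', ?_⟩
        simp only [Set.mem_singleton_iff]
        rintro rfl
        have hnodup := edges_nodup_of_support_nodup hp.support_nodup
        rw [edges_cons] at hnodup
        rw [← hhead] at he'
        exact (List.nodup_cons.1 hnodup).1 he'
      · intro u hu
        rw [support_transfer] at hu
        simp [support_cons, hu]
    case neg =>
      have he' : s(x, y) ∈ p'.edges := he.resolve_left fun hh => hhead hh.symm
      obtain ⟨w₁, w₂, hsym, q, r, hq, hr⟩ := orient p' hp.of_cons he'
      have hadj : (H.deleteEdges {s(x,y)}).Adj a c := by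
        rw [SimpleGraph.deleteEdges_adj]
        exact ⟨h, by simpa using hhead⟩
      refine ⟨w₁, w₂, hsym, Walk.cons hadj q, r, ?_, ?_⟩
      · intro u hu
        rw [support_cons, List.mem_cons] at hu ⊢
        exact hu.imp id fun h' => hq u h'
      · intro u hu
        rw [support_cons, List.mem_cons]
        exact Or.inr (hr u hu)



/-- Delete a set of vertices from a graph (keeping the vertex type). -/
def delv (G : SimpleGraph V) (W : Set V) : SimpleGraph V where
  Adj a b := G.Adj a b ∧ a ∉ W ∧ b ∉ W
  symm := ⟨fun _ _ ⟨h, ha, hb⟩ => ⟨h.symm, hb, ha⟩⟩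
  loopless := ⟨fun a ⟨h, _, _⟩ => G.loopless.irrefl a h⟩

lemma delv_le {G : SimpleGraph V} {W : Set V} : delv G W ≤ G := fun _ _ h => (show G.Adj _ _ ∧ _ from h).1

lemma toDelv {G : SimpleGraph V} {W : Set V} :
    ∀ {a b : V} (p : G.Walk a b), (∀ u ∈ p.support, u ∉ W) →
      ∃ q : (delv G W).Walk a b, q.support = p.support
  | _, _, Walk.nil, _ => ⟨Walk.nil, rfl⟩
  | a, b, @Walk.cons _ _ _ c _ had p', h => by
    obtain ⟨q, hq⟩ := toDelv p' (fun u hu => h u (by simp [hu]))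
    exact ⟨Walk.cons (@id ((delv G W).Adj a c) (⟨had, h a (by simp), h c (by simp)⟩ : G.Adj a c ∧ a ∉ W ∧ c ∉ W)) q, by simp [hq]⟩

lemma delv_tail {G : SimpleGraph V} {W : Set V} :
    ∀ {a b : V} (p : (delv G W).Walk a b), ∀ u ∈ p.support.tail, u ∉ W
  | _, _, Walk.nil => by simp
  | a, b, @Walk.cons _ _ _ c _ had p' => by
    intro u hu
    rw [support_cons, List.tail_cons] at hu
    rcases List.mem_cons.1 (by rwa [p'.support_eq_cons] at hu) with rfl | hu'
    · exact (show G.Adj _ _ ∧ _ ∧ _ from had).2.2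
    · exact delv_tail p' u (by rwa [p'.support_eq_cons, List.tail_cons])

lemma menger_base [DecidableEq V] {H : SimpleGraph V} (h : H.edgeSet = ∅) (X Y : Finset V)
    (k : ℕ) (hsep : ∀ S : Finset V, Sep H X Y S → k ≤ S.card) : PathSys H X Y k := by
  have hnil : ∀ {a b : V}, H.Walk a b → a = b := by
    intro a b p
    cases p with
    | nil => rfl
    | cons had _ => exact absurd (H.mem_edgeSet.2 had) (by simp [h])
  have hXY : Sep H X Y (X ∩ Y) := by
    intro a ha b hb p
    obtain rfl := hnil p
    exact ⟨a, Finset.mem_inter.2 ⟨ha, hb⟩, p.start_mem_support⟩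
  obtain ⟨s, hsub, hcard⟩ := Finset.exists_subset_card_eq (hsep _ hXY)
  have e : Fin k ≃ {x // x ∈ s} := (s.equivFin.trans (finCongr hcard)).symm
  refine ⟨fun i => (e i : V), fun i => (e i : V), fun _ => Walk.nil, ?_, ?_, ?_, ?_⟩
  · exact fun i => (Finset.mem_inter.1 (hsub (e i).2)).1
  · exact fun i => (Finset.mem_inter.1 (hsub (e i).2)).2
  · exact fun i => IsPath.nil
  · intro i j hij u hu hu'
    simp only [support_nil, List.mem_singleton] at hu hu'
    exact hij (e.injective (Subtype.ext (hu ▸ hu')))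

lemma end_not_mem_takeUntil [DecidableEq V] {H : SimpleGraph V} {a b u : V} {p : H.Walk a b}
    (hp : p.IsPath) (h : u ∈ p.support) (hub : u ≠ b) :
    b ∉ (p.takeUntil u h).support := by
  intro hb
  have hnodup : p.support.Nodup := hp.support_nodup
  rw [← p.take_spec h, support_append] at hnodup
  have hdisj := List.disjoint_of_nodup_append hnodup
  have hbd : b ∈ (p.dropUntil u h).support.tail := by
    have hmem : b ∈ (p.dropUntil u h).support := (p.dropUntil u h).end_mem_support
    rw [(p.dropUntil u h).support_eq_cons] at hmem
    exact (List.mem_cons.1 hmem).resolve_left fun hh => hub hh.symm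
  exact hdisj hb hbd

lemma start_not_mem_dropUntil [DecidableEq V] {H : SimpleGraph V} {a b u : V} {p : H.Walk a b}
    (hp : p.IsPath) (h : u ∈ p.support) (hua : u ≠ a) :
    a ∉ (p.dropUntil u h).support := by
  intro hadrop
  have hnodup : p.support.Nodup := hp.support_nodup
  rw [← p.take_spec h, support_append] at hnodup
  have hdisj := List.disjoint_of_nodup_append hnodup
  have haa : a ∈ (p.takeUntil u h).support := (p.takeUntil u h).start_mem_support
  have hta : a ∈ (p.dropUntil u h).support.tail := by
    rw [(p.dropUntil u h).support_eq_cons] at hadrop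
    exact (List.mem_cons.1 hadrop).resolve_left fun hh => hua hh.symm
  exact hdisj haa hta

theorem menger [Fintype V] [DecidableEq V] :
    ∀ (n : ℕ) (H : SimpleGraph V), H.edgeSet.ncard ≤ n → ∀ (X Y : Finset V) (k : ℕ),
      (∀ S : Finset V, Sep H X Y S → k ≤ S.card) → PathSys H X Y k := by
  intro n
  induction n with
  | zero =>
    intro H hn X Y k hsep
    exact menger_base ((Set.ncard_eq_zero (Set.toFinite _)).1 (Nat.le_zero.1 hn)) X Y k hsep
  | succ n ih =>
    intro H hn X Y k hsep
    by_cases hne : H.edgeSet = ∅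
    · exact menger_base hne X Y k hsep
    obtain ⟨x0, y0, he0⟩ := Sym2.exists.mp (Set.nonempty_iff_ne_empty.2 hne)
    have hncard : ∀ z w : V, s(z, w) ∈ H.edgeSet →
        (H.deleteEdges {s(z, w)}).edgeSet.ncard ≤ n := by
      intro z w hzw
      have hlt : (H.deleteEdges {s(z, w)}).edgeSet.ncard < H.edgeSet.ncard := by
        rw [SimpleGraph.edgeSet_deleteEdges]
        refine Set.ncard_lt_ncard ?_ (Set.toFinite _)
        rw [Set.ssubset_iff_of_subset Set.diff_subset]
        exact ⟨s(z, w), hzw, fun hdf => hdf.2 rfl⟩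
      omega
    by_cases hall : ∀ S : Finset V, Sep (H.deleteEdges {s(x0, y0)}) X Y S → k ≤ S.card
    · exact (ih _ (hncard x0 y0 he0) X Y k hall).mono (SimpleGraph.deleteEdges_le _)
    push_neg at hall
    obtain ⟨S', hsepS', hcard'⟩ := hall
    have hnot : ¬ Sep H X Y S' := fun hs => absurd (hsep S' hs) (by omega)
    unfold Sep at hnot
    push_neg at hnot
    obtain ⟨a0, ha0, b0, hb0, p0, hp0⟩ := hnot
    have hppath : p0.bypass.IsPath := p0.bypass_isPath
    have hpavoid : ∀ s ∈ S', s ∉ p0.bypass.support := fun s hs hmem =>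
      hp0 s hs (p0.support_bypass_subset hmem)
    have hpe : s(x0, y0) ∈ p0.bypass.edges := by
      by_contra hnotin
      have hedges : ∀ e ∈ p0.bypass.edges, e ∈ (H.deleteEdges {s(x0, y0)}).edgeSet := by
        intro e hee
        rw [SimpleGraph.edgeSet_deleteEdges]
        refine ⟨p0.bypass.edges_subset_edgeSet hee, ?_⟩
        simp only [Set.mem_singleton_iff]
        rintro rfl
        exact hnotin hee
      obtain ⟨s, hsS, hsup⟩ := hsepS' ha0 hb0 (p0.bypass.transfer _ hedges)
      rw [support_transfer] at hsup
      exact hpavoid s hsS hsup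
    obtain ⟨w₁, w₂, hsym, q0, r0, hq0sub, hr0sub⟩ := orient p0.bypass hppath hpe
    have hGeq : H.deleteEdges {s(x0, y0)} = H.deleteEdges {s(w₁, w₂)} := by rw [hsym]
    rw [hGeq] at hsepS'
    have hq0E : ∀ e ∈ q0.edges, e ∈ (H.deleteEdges {s(w₁, w₂)}).edgeSet := fun e he => by
      rw [← hGeq]; exact q0.edges_subset_edgeSet he
    have hr0E : ∀ e ∈ r0.edges, e ∈ (H.deleteEdges {s(w₁, w₂)}).edgeSet := fun e he => by
      rw [← hGeq]; exact r0.edges_subset_edgeSet he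
    have he12 : s(w₁, w₂) ∈ H.edgeSet := by rw [hsym]; exact he0
    have hadj12 : H.Adj w₁ w₂ := H.mem_edgeSet.1 he12
    have hne12 : w₁ ≠ w₂ := hadj12.ne
    have hG'le : (H.deleteEdges {s(w₁, w₂)}).edgeSet.ncard ≤ n := hncard w₁ w₂ he12
    have hq0avoid : ∀ s, s ∈ (q0.transfer _ hq0E).support → s ∈ S' → False := by
      intro s hmem hs
      rw [support_transfer] at hmem
      exact hpavoid s hs (hq0sub s hmem)
    have hr0avoid : ∀ s, s ∈ (r0.transfer _ hr0E).support → s ∈ S' → False := by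
      intro s hmem hs
      rw [support_transfer] at hmem
      exact hpavoid s hs (hr0sub s hmem)
    have hnotDx2 : ¬ (∃ a, a ∈ X ∧ ∃ q : (H.deleteEdges {s(w₁, w₂)}).Walk a w₂,
        ∀ s ∈ S', s ∉ q.support) := by
      rintro ⟨a, ha, q, hq⟩
      obtain ⟨s, hsS, hsup⟩ := hsepS' ha hb0 (q.append (r0.transfer _ hr0E))
      rcases (Walk.mem_support_append_iff _ _).1 hsup with h | h
      · exact hq s hsS h
      · exact hr0avoid s h hsS
    have hnotDy1 : ¬ (∃ b, b ∈ Y ∧ ∃ r : (H.deleteEdges {s(w₁, w₂)}).Walk w₁ b,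
        ∀ s ∈ S', s ∉ r.support) := by
      rintro ⟨b, hb, r, hr⟩
      obtain ⟨s, hsS, hsup⟩ := hsepS' ha0 hb ((q0.transfer _ hq0E).append r)
      rcases (Walk.mem_support_append_iff _ _).1 hsup with h | h
      · exact hq0avoid s h hsS
      · exact hr s hsS h
    have hXsYs : ∀ w : V, w = w₁ ∨ w = w₂ → Sep H X Y (insert w S') := by
      intro w hw a ha b hb pp
      by_cases hE : s(w₁, w₂) ∈ pp.bypass.edges
      · refine ⟨w, Finset.mem_insert_self _ _, pp.support_bypass_subset ?_⟩
        rcases hw with rfl | rfl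
        · exact pp.bypass.fst_mem_support_of_mem_edges hE
        · exact pp.bypass.snd_mem_support_of_mem_edges hE
      · have hedges : ∀ e ∈ pp.bypass.edges, e ∈ (H.deleteEdges {s(w₁, w₂)}).edgeSet := by
          intro e hee
          rw [SimpleGraph.edgeSet_deleteEdges]
          refine ⟨pp.bypass.edges_subset_edgeSet hee, ?_⟩
          simp only [Set.mem_singleton_iff]
          rintro rfl
          exact hE hee
        obtain ⟨s, hsS, hsup⟩ := hsepS' ha hb (pp.bypass.transfer _ hedges)
        rw [support_transfer] at hsup
        exact ⟨s, Finset.mem_insert_of_mem hsS, pp.support_bypass_subset hsup⟩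
    have hw1S : w₁ ∉ S' := by
      intro hmem
      have := hsep _ (hXsYs w₁ (Or.inl rfl))
      rw [Finset.insert_eq_self.2 hmem] at this
      omega
    have hw2S : w₂ ∉ S' := by
      intro hmem
      have := hsep _ (hXsYs w₂ (Or.inr rfl))
      rw [Finset.insert_eq_self.2 hmem] at this
      omega
    have hk1 : k ≤ S'.card + 1 := by
      have := hsep _ (hXsYs w₁ (Or.inl rfl))
      rwa [Finset.card_insert_of_notMem hw1S] at this
    have hcardXs : (insert w₁ S').card = k := by
      rw [Finset.card_insert_of_notMem hw1S]; omega
    have hcardYs : (insert w₂ S').card = k := by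
      rw [Finset.card_insert_of_notMem hw2S]; omega
    have hsepX : ∀ T : Finset V, Sep (H.deleteEdges {s(w₁, w₂)}) X (insert w₁ S') T →
        k ≤ T.card := by
      intro T hT
      apply hsep
      intro a ha b hb pp
      by_cases hE : s(w₁, w₂) ∈ pp.bypass.edges
      · obtain ⟨u₁, u₂, husym, qq, rr, hqs, hrs⟩ := orient pp.bypass pp.bypass_isPath hE
        rcases Sym2.eq_iff.1 husym with ⟨rfl, rfl⟩ | ⟨rfl, rfl⟩
        · obtain ⟨t, htT, htsup⟩ := hT ha (Finset.mem_insert_self _ _) qq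
          exact ⟨t, htT, pp.support_bypass_subset (hqs _ htsup)⟩
        · by_cases hqq : ∃ s ∈ S', s ∈ qq.support
          · obtain ⟨s, hsS, hssup⟩ := hqq
            obtain ⟨t, htT, htsup⟩ := hT ha (Finset.mem_insert_of_mem hsS)
              (qq.takeUntil s hssup)
            exact ⟨t, htT, pp.support_bypass_subset
              (hqs _ (qq.support_takeUntil_subset hssup htsup))⟩
          · push_neg at hqq
            exact absurd ⟨a, ha, qq, hqq⟩ hnotDx2
      · have hedges : ∀ e ∈ pp.bypass.edges, e ∈ (H.deleteEdges {s(w₁, w₂)}).edgeSet := by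
          intro e hee
          rw [SimpleGraph.edgeSet_deleteEdges]
          refine ⟨pp.bypass.edges_subset_edgeSet hee, ?_⟩
          simp only [Set.mem_singleton_iff]
          rintro rfl
          exact hE hee
        obtain ⟨s, hsS, hsup⟩ := hsepS' ha hb (pp.bypass.transfer _ hedges)
        obtain ⟨t, htT, htsup⟩ := hT ha (Finset.mem_insert_of_mem hsS)
          ((pp.bypass.transfer _ hedges).takeUntil s hsup)
        have hmem : t ∈ (pp.bypass.transfer _ hedges).support :=
          (pp.bypass.transfer _ hedges).support_takeUntil_subset hsup htsup
        rw [support_transfer] at hmem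
        exact ⟨t, htT, pp.support_bypass_subset hmem⟩
    have hsepY : ∀ T : Finset V, Sep (H.deleteEdges {s(w₁, w₂)}) (insert w₂ S') Y T →
        k ≤ T.card := by
      intro T hT
      apply hsep
      intro a ha b hb pp
      by_cases hE : s(w₁, w₂) ∈ pp.bypass.edges
      · obtain ⟨u₁, u₂, husym, qq, rr, hqs, hrs⟩ := orient pp.bypass pp.bypass_isPath hE
        rcases Sym2.eq_iff.1 husym with ⟨rfl, rfl⟩ | ⟨rfl, rfl⟩
        · obtain ⟨t, htT, htsup⟩ := hT (Finset.mem_insert_self _ _) hb rr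
          exact ⟨t, htT, pp.support_bypass_subset (hrs _ htsup)⟩
        · by_cases hrr : ∃ s ∈ S', s ∈ rr.support
          · obtain ⟨s, hsS, hssup⟩ := hrr
            obtain ⟨t, htT, htsup⟩ := hT (Finset.mem_insert_of_mem hsS) hb
              (rr.dropUntil s hssup)
            exact ⟨t, htT, pp.support_bypass_subset
              (hrs _ (rr.support_dropUntil_subset hssup htsup))⟩
          · push_neg at hrr
            exact absurd ⟨b, hb, rr, hrr⟩ hnotDy1
      · have hedges : ∀ e ∈ pp.bypass.edges, e ∈ (H.deleteEdges {s(w₁, w₂)}).edgeSet := by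
          intro e hee
          rw [SimpleGraph.edgeSet_deleteEdges]
          refine ⟨pp.bypass.edges_subset_edgeSet hee, ?_⟩
          simp only [Set.mem_singleton_iff]
          rintro rfl
          exact hE hee
        obtain ⟨s, hsS, hsup⟩ := hsepS' ha hb (pp.bypass.transfer _ hedges)
        obtain ⟨t, htT, htsup⟩ := hT (Finset.mem_insert_of_mem hsS) hb
          ((pp.bypass.transfer _ hedges).dropUntil s hsup)
        have hmem : t ∈ (pp.bypass.transfer _ hedges).support :=
          (pp.bypass.transfer _ hedges).support_dropUntil_subset hsup htsup
        rw [support_transfer] at hmem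
        exact ⟨t, htT, pp.support_bypass_subset hmem⟩
    obtain ⟨aP, cP0, PP, haP, hbP, hPpath, hPdisj⟩ := ih _ hG'le X (insert w₁ S') k hsepX
    obtain ⟨dQ0, bQ, QQ, haQ, hbQ, hQpath, hQdisj⟩ := ih _ hG'le (insert w₂ S') Y k hsepY
    choose c tP hcXs htPsub htPonly htPpath0 using
      fun i => firstHit (↑(insert w₁ S') : Set V) (PP i) (Finset.mem_coe.2 (hbP i))
    have htPpath : ∀ i, (tP i).IsPath := fun i => htPpath0 i (hPpath i)
    choose d tQr hdYs htQrsub htQronly htQrpath0 using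
      fun j => firstHit (↑(insert w₂ S') : Set V) (QQ j).reverse (Finset.mem_coe.2 (haQ j))
    set tQ : ∀ j : Fin k, (H.deleteEdges {s(w₁, w₂)}).Walk (d j) (bQ j) :=
      fun j => (tQr j).reverse with htQdef
    have hQsub : ∀ j : Fin k, ∀ u ∈ (tQ j).support, u ∈ (QQ j).support := by
      intro j u hu
      rw [htQdef, support_reverse, List.mem_reverse] at hu
      have := htQrsub j u hu
      rwa [support_reverse, List.mem_reverse] at this
    have hQonly : ∀ j : Fin k, ∀ u ∈ (tQ j).support, u ∈ (↑(insert w₂ S') : Set V) → u = d j := by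
      intro j u hu hY
      rw [htQdef, support_reverse, List.mem_reverse] at hu
      exact htQronly j u hu hY
    have hQpath' : ∀ j, (tQ j).IsPath := fun j =>
      (htQrpath0 j (hQpath j).reverse).reverse
    have hcmemP : ∀ i, c i ∈ (PP i).support := fun i => htPsub i _ (tP i).end_mem_support
    have hdmemQ : ∀ j, d j ∈ (QQ j).support := by
      intro j
      have := htQrsub j _ (tQr j).end_mem_support
      rwa [support_reverse, List.mem_reverse] at this
    have hcinj : Function.Injective c := by
      intro i j hij
      by_contra hne'
      exact hPdisj i j hne' (c i) (hcmemP i) (hij ▸ hcmemP j)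
    have hdinj : Function.Injective d := by
      intro i j hij
      by_contra hne'
      exact hQdisj i j hne' (d i) (hdmemQ i) (hij ▸ hdmemQ j)
    have hcsurj : ∀ w ∈ insert w₁ S', ∃ i, c i = w := by
      have himg : Finset.image c Finset.univ = insert w₁ S' := by
        apply Finset.eq_of_subset_of_card_le
        · intro w hw
          obtain ⟨i, _, rfl⟩ := Finset.mem_image.1 hw
          exact Finset.mem_coe.1 (hcXs i)
        · rw [Finset.card_image_of_injective _ hcinj, Finset.card_univ, Fintype.card_fin,
            hcardXs]
      intro w hw
      obtain ⟨i, _, rfl⟩ := Finset.mem_image.1 (himg ▸ hw)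
      exact ⟨i, rfl⟩
    have hdsurj : ∀ w ∈ insert w₂ S', ∃ j, d j = w := by
      have himg : Finset.image d Finset.univ = insert w₂ S' := by
        apply Finset.eq_of_subset_of_card_le
        · intro w hw
          obtain ⟨j, _, rfl⟩ := Finset.mem_image.1 hw
          exact Finset.mem_coe.1 (hdYs j)
        · rw [Finset.card_image_of_injective _ hdinj, Finset.card_univ, Fintype.card_fin,
            hcardYs]
      intro w hw
      obtain ⟨j, _, rfl⟩ := Finset.mem_image.1 (himg ▸ hw)
      exact ⟨j, rfl⟩
    have hcS' : ∀ i, c i ≠ w₁ → c i ∈ S' := fun i h =>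
      (Finset.mem_insert.1 (Finset.mem_coe.1 (hcXs i))).resolve_left h
    have hmY : ∀ i, (if c i = w₁ then w₂ else c i) ∈ insert w₂ S' := by
      intro i
      by_cases h : c i = w₁
      · rw [if_pos h]; exact Finset.mem_insert_self _ _
      · rw [if_neg h]; exact Finset.mem_insert_of_mem (hcS' i h)
    choose ρ hρ using fun i => hdsurj _ (hmY i)
    have hρinj : Function.Injective ρ := by
      intro i j hij
      apply hcinj
      have h1 := hρ i
      rw [hij, hρ j] at h1
      by_cases hci : c i = w₁ <;> by_cases hcj : c j = w₁
      · rw [hci, hcj]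
      · rw [if_pos hci, if_neg hcj] at h1
        exact absurd (h1 ▸ hcS' j hcj) hw2S
      · rw [if_neg hci, if_pos hcj] at h1
        exact absurd (h1 ▸ hcS' i hci) hw2S
      · rw [if_neg hci, if_neg hcj] at h1
        exact h1.symm
    have hKEY : ∀ i j : Fin k, ∀ u, u ∈ (tP i).support → u ∈ (tQ j).support →
        u ∈ S' ∧ u = c i ∧ u = d j := by
      intro i j u hu1 hu2
      obtain ⟨s, hsS, hssup⟩ := hsepS' (haP i) (hbQ j)
        (((tP i).takeUntil u hu1).append ((tQ j).dropUntil u hu2))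
      rcases (Walk.mem_support_append_iff _ _).1 hssup with hsl | hsr
      · have hsP : s ∈ (tP i).support := (tP i).support_takeUntil_subset hu1 hsl
        have hsc : s = c i := htPonly i s hsP
          (Finset.mem_coe.2 (Finset.mem_insert_of_mem hsS))
        have huc : u = c i := by
          by_contra hne'
          exact end_not_mem_takeUntil (htPpath i) hu1 hne' (hsc ▸ hsl)
        have huS : u ∈ S' := by rw [huc, ← hsc]; exact hsS
        have hud : u = d j := hQonly j u hu2
          (Finset.mem_coe.2 (Finset.mem_insert_of_mem huS))
        exact ⟨huS, huc, hud⟩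
      · have hsQ : s ∈ (tQ j).support := (tQ j).support_dropUntil_subset hu2 hsr
        have hsd : s = d j := hQonly j s hsQ
          (Finset.mem_coe.2 (Finset.mem_insert_of_mem hsS))
        have hud : u = d j := by
          by_contra hne'
          exact start_not_mem_dropUntil (hQpath' j) hu2 hne' (hsd ▸ hsr)
        have huS : u ∈ S' := by rw [hud, ← hsd]; exact hsS
        have huc : u = c i := htPonly i u hu1
          (Finset.mem_coe.2 (Finset.mem_insert_of_mem huS))
        exact ⟨huS, huc, hud⟩
    have hglue : ∀ i, ∃ RR : H.Walk (aP i) (bQ (ρ i)), RR.IsPath ∧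
        ∀ u ∈ RR.support, u ∈ (tP i).support ∨ u ∈ (tQ (ρ i)).support := by
      intro i
      have hTPedges : ∀ e ∈ (tP i).edges, e ∈ H.edgeSet := fun e he =>
        SimpleGraph.edgeSet_subset_edgeSet.2 (SimpleGraph.deleteEdges_le _)
          ((tP i).edges_subset_edgeSet he)
      have hTQedges : ∀ e ∈ (tQ (ρ i)).edges, e ∈ H.edgeSet := fun e he =>
        SimpleGraph.edgeSet_subset_edgeSet.2 (SimpleGraph.deleteEdges_le _)
          ((tQ (ρ i)).edges_subset_edgeSet he)
      by_cases hci : c i = w₁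
      · have hd2 : d (ρ i) = w₂ := by rw [hρ i, if_pos hci]
        refine ⟨(((tP i).transfer H hTPedges).copy rfl hci).append
          (Walk.cons hadj12 (((tQ (ρ i)).transfer H hTQedges).copy hd2 rfl)), ?_, ?_⟩
        · rw [isPath_def, support_append, support_cons, List.tail_cons, support_copy,
            support_copy, support_transfer, support_transfer]
          refine List.Nodup.append (htPpath i).support_nodup
            (hQpath' (ρ i)).support_nodup ?_
          intro u hu1 hu2
          obtain ⟨huS, huc, _⟩ := hKEY i (ρ i) u hu1 hu2
          exact hw1S (by rw [← hci, ← huc]; exact huS)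
        · intro u hu
          rw [support_append, support_cons, List.tail_cons, support_copy, support_copy,
            support_transfer, support_transfer, List.mem_append] at hu
          exact hu
      · have hd2 : d (ρ i) = c i := by rw [hρ i, if_neg hci]
        refine ⟨((tP i).transfer H hTPedges).append
          ((((tQ (ρ i)).transfer H hTQedges).copy hd2 rfl)), ?_, ?_⟩
        · rw [isPath_def, support_append, support_copy, support_transfer, support_transfer]
          refine List.Nodup.append (htPpath i).support_nodup
            ((List.tail_sublist _).nodup (hQpath' (ρ i)).support_nodup) ?_
          intro u hu1 hu2
          have hu2' : u ∈ (tQ (ρ i)).support := List.mem_of_mem_tail hu2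
          obtain ⟨huS, huc, hud⟩ := hKEY i (ρ i) u hu1 hu2'
          have hnodup := (hQpath' (ρ i)).support_nodup
          rw [(tQ (ρ i)).support_eq_cons] at hnodup
          exact (List.nodup_cons.1 hnodup).1 (hud ▸ hu2)
        · intro u hu
          rw [support_append, support_copy, support_transfer, support_transfer,
            List.mem_append] at hu
          exact hu.imp id List.mem_of_mem_tail
    choose R hRpath hRsup using hglue
    refine ⟨aP, fun i => bQ (ρ i), R, haP, fun i => hbQ (ρ i), hRpath, ?_⟩
    intro i j hij u hu hu'
    rcases hRsup i u hu with h1 | h1 <;> rcases hRsup j u hu' with h2 | h2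
    · exact hPdisj i j hij u (htPsub i u h1) (htPsub j u h2)
    · obtain ⟨huS, huc, hud⟩ := hKEY i (ρ j) u h1 h2
      rw [hρ j] at hud
      by_cases hcj : c j = w₁
      · rw [if_pos hcj] at hud
        exact hw2S (hud ▸ huS)
      · rw [if_neg hcj] at hud
        exact hij (hcinj (huc.symm.trans hud))
    · obtain ⟨huS, huc, hud⟩ := hKEY j (ρ i) u h2 h1
      rw [hρ i] at hud
      by_cases hci : c i = w₁
      · rw [if_pos hci] at hud
        exact hw2S (hud ▸ huS)
      · rw [if_neg hci] at hud
        exact hij (hcinj (huc.symm.trans hud)).symm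
    · exact hQdisj (ρ i) (ρ j) (fun h => hij (hρinj h)) u (hQsub (ρ i) u h1)
        (hQsub (ρ j) u h2)

end MengerAux

open MengerAux
theorem fan_excluding_F {V : Type*} [Fintype V] [DecidableEq V]
    (G : SimpleGraph V) (f : ℕ) (hconn : KConnected G (3 * f / 2 + 1))
    (F : Finset V) (hF : F.card ≤ f)
    (A B : Finset V) (hunion : A ∪ B = Finset.univ) (hdisj : A ∩ B = ∅)
    (v : V) (hvB : v ∈ B)
    (hBF : (B ∩ (F.erase v)).card ≤ f / 2)
    (hA : f + 1 ≤ A.card) :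
    ∃ (a : Fin (f + 1) → V) (P : ∀ i, G.Walk (a i) v),
      Function.Injective a ∧
      (∀ i, a i ∈ A ∧ (P i).IsPath ∧ ∀ x ∈ (P i).internals, x ∉ F) ∧
      ∀ i j, i ≠ j → ∀ x, x ∈ (P i).support → x ∈ (P j).support → x = v := by
  classical
  have hAB : ∀ u, u ∈ A → u ∉ B := by
    intro u hu hub
    have hmem : u ∈ A ∩ B := Finset.mem_inter.2 ⟨hu, hub⟩
    rw [hdisj] at hmem
    exact absurd hmem (Finset.notMem_empty u)
  have hABu : ∀ u : V, u ∈ A ∨ u ∈ B := by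
    intro u
    have : u ∈ A ∪ B := by rw [hunion]; exact Finset.mem_univ u
    exact Finset.mem_union.1 this
  obtain ⟨A', hFA', hA'A, hA'card⟩ := Finset.exists_subsuperset_card_eq
    (Finset.inter_subset_left (s₂ := F))
    (le_trans (le_trans (Finset.card_le_card Finset.inter_subset_right) hF) (Nat.le_succ f)) hA
  have hvS₀ : v ∉ B ∩ F.erase v := fun h =>
    (Finset.mem_erase.1 (Finset.mem_inter.1 h).2).1 rfl
  -- the separator bound for Menger
  have hsepmain : ∀ S : Finset V,
      Sep (delv G (↑(B ∩ F.erase v) ∪ {v})) A' (G.neighborFinset v \ insert v (B ∩ F.erase v)) S →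
      f + 1 ≤ S.card := by
    intro S hS
    by_contra hlt
    push_neg at hlt
    have hScard : S.card ≤ f := by omega
    have hTcard : (S.erase v ∪ (B ∩ F.erase v)).card ≤ 3 * f / 2 + 1 := by
      have h1 : (S.erase v).card ≤ f := le_trans (Finset.card_erase_le) hScard
      have h3 := Finset.card_union_le (S.erase v) (B ∩ F.erase v)
      have h5 : 3 * f = f + 2 * f := by ring
      have h4 : (f + 2 * f) / 2 = f / 2 + f := Nat.add_mul_div_left f f two_pos
      omega
    have hAS : (A' \ S).Nonempty := by
      rw [← Finset.card_pos]
      have h5 := Finset.le_card_sdiff S A'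
      omega
    obtain ⟨a, haAS⟩ := hAS
    obtain ⟨haA', haS⟩ := Finset.mem_sdiff.1 haAS
    have haT : a ∉ S.erase v ∪ (B ∩ F.erase v) := by
      simp only [Finset.mem_union, Finset.mem_erase, not_or]
      exact ⟨fun h => haS h.2, fun h => hAB a (hA'A haA') (Finset.mem_inter.1 h).1⟩
    have hvT : v ∉ S.erase v ∪ (B ∩ F.erase v) := by
      simp only [Finset.mem_union, not_or]
      exact ⟨Finset.notMem_erase v S, hvS₀⟩
    have hconnT := hconn.2 _ hTcard
    have haMem : a ∈ ((⊤ : G.Subgraph).deleteVerts ↑(S.erase v ∪ (B ∩ F.erase v))).verts := by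
      simp only [SimpleGraph.Subgraph.deleteVerts_verts, SimpleGraph.Subgraph.verts_top,
        Set.mem_diff, Set.mem_univ, true_and, Finset.mem_coe]
      exact haT
    have hvMem : v ∈ ((⊤ : G.Subgraph).deleteVerts ↑(S.erase v ∪ (B ∩ F.erase v))).verts := by
      simp only [SimpleGraph.Subgraph.deleteVerts_verts, SimpleGraph.Subgraph.verts_top,
        Set.mem_diff, Set.mem_univ, true_and, Finset.mem_coe]
      exact hvT
    obtain ⟨w⟩ := hconnT ⟨a, haMem⟩ ⟨v, hvMem⟩
    have hwGsup : ∀ u ∈ (w.map ((⊤ : G.Subgraph).deleteVerts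
        ↑(S.erase v ∪ (B ∩ F.erase v))).hom).support, u ∉ S.erase v ∪ (B ∩ F.erase v) := by
      intro u hu
      rw [SimpleGraph.Walk.support_map] at hu
      obtain ⟨u', _, rfl⟩ := List.mem_map.1 hu
      have h2 := u'.2
      simp only [SimpleGraph.Subgraph.deleteVerts_verts, SimpleGraph.Subgraph.verts_top,
        Set.mem_diff, Set.mem_univ, true_and, Finset.mem_coe] at h2
      exact h2
    set q := (w.map ((⊤ : G.Subgraph).deleteVerts
        ↑(S.erase v ∪ (B ∩ F.erase v))).hom).bypass with hqdef
    have hqpath : q.IsPath := SimpleGraph.Walk.bypass_isPath _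
    have hqsup : ∀ u ∈ q.support, u ∉ S.erase v ∪ (B ∩ F.erase v) := fun u hu =>
      hwGsup u (SimpleGraph.Walk.support_bypass_subset _ hu)
    have hav : a ≠ v := fun h => hAB a (hA'A haA') (h ▸ hvB)
    have hnn : ¬ q.reverse.Nil := by
      intro hnil
      exact hav (SimpleGraph.Walk.Nil.eq hnil).symm
    obtain ⟨b, hadj, r, hqr⟩ := SimpleGraph.Walk.not_nil_iff.1 hnn
    have hrevpath : q.reverse.IsPath := hqpath.reverse
    rw [hqr] at hrevpath
    have hrpath : r.IsPath := (SimpleGraph.Walk.cons_isPath_iff _ _).1 hrevpath |>.1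
    have hvnr : v ∉ r.support := (SimpleGraph.Walk.cons_isPath_iff _ _).1 hrevpath |>.2
    have hrsub : ∀ u ∈ r.support, u ∈ q.support := by
      intro u hu
      have : u ∈ q.reverse.support := by
        rw [hqr, SimpleGraph.Walk.support_cons]
        exact List.mem_cons_of_mem _ hu
      rwa [SimpleGraph.Walk.support_reverse, List.mem_reverse] at this
    have hrsupW : ∀ u ∈ r.reverse.support, u ∉ (↑(B ∩ F.erase v) : Set V) ∪ {v} := by
      intro u hu
      rw [SimpleGraph.Walk.support_reverse, List.mem_reverse] at hu
      rintro (huS | huv)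
      · exact hqsup u (hrsub u hu) (Finset.mem_union_right _ (Finset.mem_coe.1 huS))
      · rw [Set.mem_singleton_iff] at huv
        exact hvnr (huv ▸ hu)
    obtain ⟨qH, hqHsup⟩ := toDelv r.reverse hrsupW
    have hbY : b ∈ G.neighborFinset v \ insert v (B ∩ F.erase v) := by
      rw [Finset.mem_sdiff, SimpleGraph.mem_neighborFinset]
      refine ⟨hadj, ?_⟩
      simp only [Finset.mem_insert, not_or]
      refine ⟨hadj.ne', fun hbS => ?_⟩
      exact hqsup b (hrsub b r.start_mem_support) (Finset.mem_union_right _ hbS)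
    obtain ⟨s, hsS, hssup⟩ := hS haA' hbY qH
    replace hssup : s ∈ qH.support := hssup
    rw [hqHsup, SimpleGraph.Walk.support_reverse, List.mem_reverse] at hssup
    have hsT : s ∉ S.erase v ∪ (B ∩ F.erase v) := hqsup s (hrsub s hssup)
    have hsv : s = v := by
      by_contra hsv
      exact hsT (Finset.mem_union_left _ (Finset.mem_erase.2 ⟨hsv, hsS⟩))
    exact hvnr (hsv ▸ hssup)
  obtain ⟨aF, bF, PF, haF, hbF, hPFpath, hPFdisj⟩ :=
    menger ((delv G (↑(B ∩ F.erase v) ∪ {v})).edgeSet.ncard)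
      (delv G (↑(B ∩ F.erase v) ∪ {v})) le_rfl A'
      (G.neighborFinset v \ insert v (B ∩ F.erase v)) (f + 1) hsepmain
  have haFinj : Function.Injective aF := by
    intro i j hij
    by_contra hne'
    exact hPFdisj i j hne' (aF i) (PF i).start_mem_support (by rw [hij]; exact (PF j).start_mem_support)
  have haFsurj : ∀ u ∈ A', ∃ i, aF i = u := by
    have himg : Finset.image aF Finset.univ = A' := by
      apply Finset.eq_of_subset_of_card_le
      · intro u hu
        obtain ⟨i, _, rfl⟩ := Finset.mem_image.1 hu
        exact haF i
      · rw [Finset.card_image_of_injective _ haFinj, Finset.card_univ, Fintype.card_fin,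
          hA'card]
    intro u hu
    obtain ⟨i, _, rfl⟩ := Finset.mem_image.1 (himg ▸ hu)
    exact ⟨i, rfl⟩
  have hPFedges : ∀ i, ∀ e ∈ (PF i).edges, e ∈ G.edgeSet := fun i e he =>
    SimpleGraph.edgeSet_subset_edgeSet.2 delv_le ((PF i).edges_subset_edgeSet he)
  have hadjbv : ∀ i, G.Adj (bF i) v := by
    intro i
    have hmem := (Finset.mem_sdiff.1 (hbF i)).1
    exact ((SimpleGraph.mem_neighborFinset _ _ _).1 hmem).symm
  have htailW : ∀ i, ∀ x ∈ (PF i).support.tail, x ∉ (↑(B ∩ F.erase v) : Set V) ∪ {v} :=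
    fun i => delv_tail (PF i)
  have hvnot : ∀ i, v ∉ (PF i).support := by
    intro i hmem
    rw [(PF i).support_eq_cons] at hmem
    rcases List.mem_cons.1 hmem with h | h
    · exact hAB _ (hA'A (haF i)) (by rwa [h] at hvB)
    · exact htailW i v h (Set.mem_union_right _ rfl)
  have hconcsup : ∀ i, (((PF i).transfer G (hPFedges i)).concat (hadjbv i)).support
      = (PF i).support ++ [v] := by
    intro i
    rw [SimpleGraph.Walk.support_concat, SimpleGraph.Walk.support_transfer]
  refine ⟨aF, fun i => ((PF i).transfer G (hPFedges i)).concat (hadjbv i), haFinj, ?_, ?_⟩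
  · intro i
    refine ⟨hA'A (haF i), ?_, ?_⟩
    · rw [SimpleGraph.Walk.isPath_def, hconcsup i]
      refine List.Nodup.append (hPFpath i).support_nodup
        (List.nodup_singleton v) ?_
      · intro u hu hu2
        rw [List.mem_singleton] at hu2
        exact hvnot i (hu2 ▸ hu)
    · intro x hx
      have hint : (((PF i).transfer G (hPFedges i)).concat (hadjbv i)).internals
          = (PF i).support.tail := by
        rw [SimpleGraph.Walk.internals, hconcsup i, (PF i).support_eq_cons]
        simp
      rw [hint] at hx
      have hxsup : x ∈ (PF i).support := List.mem_of_mem_tail hx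
      have hxW := htailW i x hx
      intro hxF
      rcases hABu x with hxA | hxB
      · have hxA' : x ∈ A' := hFA' (Finset.mem_inter.2 ⟨hxA, hxF⟩)
        obtain ⟨j, rfl⟩ := haFsurj x hxA'
        have hxne : aF j ≠ aF i := by
          intro h
          have hnodup := (hPFpath i).support_nodup
          rw [(PF i).support_eq_cons] at hnodup
          exact (List.nodup_cons.1 hnodup).1 (by rwa [h] at hx)
        exact hPFdisj j i (fun h => hxne (by rw [h])) (aF j) (PF j).start_mem_support hxsup
      · have hxv : x ≠ v := fun h => hxW (Set.mem_union_right _ (Set.mem_singleton_iff.2 h))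
        exact hxW (Set.mem_union_left _ (Finset.mem_coe.2
          (Finset.mem_inter.2 ⟨hxB, Finset.mem_erase.2 ⟨hxv, hxF⟩⟩)))
  · intro i j hij x hxi hxj
    rw [hconcsup i, List.mem_append] at hxi
    rw [hconcsup j, List.mem_append] at hxj
    rcases hxi with h1 | h1
    · rcases hxj with h2 | h2
      · exact absurd h2 (hPFdisj i j hij x h1)
      · exact List.mem_singleton.1 h2
    · exact List.mem_singleton.1 h1
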